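/- arXiv:2405.01807 — 3 statements merged into one kernel-verified Lean document; each statement's English description precedes it below -/
import Mathlib

section
/- For positive integers t and a ≥ 2, the product P = ∏_{j=1}^{t} (ja)/(ja+1) satisfies P^a ≥ 1/(ta+1). -/
lemma bern_key (n : ℕ) (b : ℝ) (hb : (n:ℝ) + 2 ≤ b) :
    (b - n - 1) * (b+1)^(n+1) ≤ b^(n+2) := by
  have hn : (0:ℝ) ≤ n := n.cast_nonneg
  have hb0 : (0:ℝ) < b := by linarith
  have hb1 : (0:ℝ) < b + 1 := by linarith
  have hbern : 1 + ((n+1 : ℕ):ℝ) * (-(1/(b+1))) ≤ (1 + (-(1/(b+1))))^(n+1) := by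
    apply one_add_mul_le_pow
    have h1 : 1/(b+1) ≤ 1 := by rw [div_le_one hb1]; linarith
    linarith
  have h2 : (1 + (-(1/(b+1))))^(n+1) = b^(n+1)/(b+1)^(n+1) := by
    rw [← div_pow]; congr 1; field_simp; ring
  have h1 : 1 + ((n+1 : ℕ):ℝ) * (-(1/(b+1))) = (b - n)/(b+1) := by
    push_cast; field_simp; ring
  rw [h1, h2] at hbern
  have hp : (0:ℝ) < (b+1)^(n+1) := by positivity
  rw [div_le_div_iff₀ hb1 hp] at hbern
  have hple : b^(n+1) ≤ (b+1)^(n+1) :=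
    pow_le_pow_left₀ hb0.le (by linarith) _
  have hpow : b^(n+2) = b^(n+1) * b := pow_succ b (n+1)
  nlinarith [hbern, hple, hpow]

theorem product_pow_lower_bound (t a : ℕ) (ht : 0 < t) (ha : 2 ≤ a) :
    (∏ j ∈ Finset.Icc 1 t, ((j*a : ℝ) / (j*a + 1)))^a ≥ 1 / (t*a + 1) := by
  clear ht
  obtain ⟨n, rfl⟩ : ∃ n, a = n + 2 := ⟨a - 2, by omega⟩
  induction t with
  | zero => simp
  | succ t ih =>
    rw [Finset.prod_Icc_succ_top (Nat.le_add_left 1 t), mul_pow]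
    push_cast at ih ⊢
    have hn : (0:ℝ) ≤ n := n.cast_nonneg
    have htn : (0:ℝ) ≤ t := t.cast_nonneg
    set b : ℝ := ((t:ℝ)+1) * ((n:ℝ)+2) with hbdef
    have hb : (n:ℝ) + 2 ≤ b := by rw [hbdef]; nlinarith
    have hb1 : (0:ℝ) < b + 1 := by linarith
    have hk := bern_key n b hb
    have hta : (0:ℝ) < (t:ℝ)*((n:ℝ)+2) + 1 := by positivity
    have hx : (0:ℝ) ≤ (b/(b+1))^(n+2) := by positivity
    refine le_trans ?_ (mul_le_mul_of_nonneg_right ih hx)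
    rw [div_pow, div_mul_div_comm, div_le_div_iff₀ hb1 (by positivity)]
    have hpow2 : (b+1)^(n+2) = (b+1)^(n+1) * (b+1) := pow_succ (b+1) (n+1)
    have hta_eq : (t:ℝ)*((n:ℝ)+2) + 1 = b - n - 1 := by rw [hbdef]; ring
    rw [hta_eq, hpow2, one_mul, one_mul]
    have hmul := mul_le_mul_of_nonneg_right hk hb1.le
    nlinarith [hmul]
end

section
/- For positive integers t and a ≥ 2, the product P = ∏_{j=1}^{t} (ja)/(ja+1) satisfies P^a ≤ 1/(t+1). -/
lemma key_term (j a : ℕ) (hj : 1 ≤ j) (ha : 1 ≤ a) :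
    ((j*a : ℝ) / (j*a + 1))^a ≤ (j : ℝ) / (j + 1) := by
  have hj' : (0:ℝ) < j := by exact_mod_cast hj
  have ha' : (0:ℝ) < a := by exact_mod_cast ha
  have hc : (0:ℝ) < (j:ℝ)*a := by positivity
  have h1 : ((j:ℝ)+1)/j ≤ (((j:ℝ)*a+1)/((j:ℝ)*a))^a := by
    have hb := one_add_mul_le_pow (a := 1/((j:ℝ)*a)) (le_trans (by norm_num : (-2:ℝ) ≤ 0) (by positivity)) a
    calc ((j:ℝ)+1)/j = 1 + (a:ℝ)*(1/((j:ℝ)*a)) := by field_simp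
      _ ≤ (1 + 1/((j:ℝ)*a))^a := hb
      _ = (((j:ℝ)*a+1)/((j:ℝ)*a))^a := by rw [add_div, div_self hc.ne', add_comm]
  have h2 : ((j:ℝ)*a) / ((j:ℝ)*a + 1) = ((((j:ℝ)*a+1)/((j:ℝ)*a)))⁻¹ := by
    rw [inv_div]
  have h3 : (j : ℝ) / (j + 1) = (((j:ℝ)+1)/j)⁻¹ := by rw [inv_div]
  rw [h2, h3, inv_pow]
  have hpos : (0:ℝ) < ((j:ℝ)+1)/j := by positivity
  exact inv_anti₀ hpos h1

lemma telescope (t : ℕ) : ∏ j ∈ Finset.Icc 1 t, ((j : ℝ) / (j + 1)) = 1 / (t + 1) := by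
  induction t with
  | zero => simp
  | succ n ih =>
    rw [Finset.prod_Icc_succ_top (by omega), ih]
    push_cast
    have h1 : ((n:ℝ) + 1) ≠ 0 := by positivity
    field_simp

theorem product_pow_upper_bound (t a : ℕ) (ht : 0 < t) (ha : 2 ≤ a) :
    (∏ j ∈ Finset.Icc 1 t, ((j*a : ℝ) / (j*a + 1)))^a ≤ 1 / (t + 1) := by
  rw [← Finset.prod_pow]
  calc ∏ j ∈ Finset.Icc 1 t, ((j*a : ℝ) / (j*a + 1))^a
      ≤ ∏ j ∈ Finset.Icc 1 t, ((j : ℝ) / (j + 1)) := by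
        apply Finset.prod_le_prod
        · intro i hi; positivity
        · intro i hi
          exact key_term i a (Finset.mem_Icc.mp hi).1 (by omega)
    _ = 1 / (t + 1) := telescope t
end

section
/- Fix G < 0 and R > 1 with C := -G·ln R > ln²2 + 2 ln 2. Then the utility U(k) = R^{G/ln(k+1)} - k satisfies U(k) ≤ 0 for all k ∈ (0,1], with U(0) interpreted as 0 (limit as k → 0+ of R^{G/ln(k+1)} is 0). -/
theorem utility_nonpos_of_large_cost (G R : ℝ) (hG : G < 0) (hR : 1 < R)
    (hC : -G * Real.log R > (Real.log 2)^2 + 2 * Real.log 2)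
    (U : ℝ → ℝ) (hU : ∀ k : ℝ, U k = R ^ (G / Real.log (k+1)) - k) :
    (∀ k ∈ Set.Ioc (0:ℝ) 1, U k ≤ 0) ∧
    Filter.Tendsto (fun k : ℝ => R ^ (G / Real.log (k+1)))
      (nhdsWithin 0 (Set.Ioi 0)) (nhds 0) := by
  have hR0 : (0:ℝ) < R := lt_trans one_pos hR
  have hlogR : 0 < Real.log R := Real.log_pos hR
  have hC1 : (1:ℝ) < -G * Real.log R := by
    have h2 : (0.6931471803:ℝ) < Real.log 2 := Real.log_two_gt_d9
    nlinarith
  constructor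
  · intro k hk
    obtain ⟨hk0, hk1⟩ := hk
    have hL : 0 < Real.log (k+1) := Real.log_pos (by linarith)
    rw [hU]
    have key : G / Real.log (k+1) * Real.log R ≤ Real.log k := by
      rw [div_mul_eq_mul_div, div_le_iff₀ hL]
      -- G * log R ≤ log k * log(k+1), i.e. (-log k)*log(k+1) ≤ -G*log R
      have h1 : Real.log (k+1) ≤ k := by
        have := Real.log_le_sub_one_of_pos (show (0:ℝ) < k+1 by linarith)
        linarith
      have h2 : -Real.log k ≤ 1/k := by
        have := Real.log_le_sub_one_of_pos (show (0:ℝ) < 1/k by positivity)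
        rw [Real.log_div one_ne_zero (ne_of_gt hk0), Real.log_one] at this
        linarith
      have hlk : 0 ≤ -Real.log k := by
        simp [Real.log_nonpos (le_of_lt hk0) hk1]
      have h3 : (-Real.log k) * Real.log (k+1) ≤ (1/k) * k := by
        apply mul_le_mul h2 h1 (le_of_lt hL) (by positivity)
      rw [one_div_mul_cancel (ne_of_gt hk0)] at h3
      nlinarith
    have : R ^ (G / Real.log (k+1)) ≤ k := by
      rw [Real.rpow_def_of_pos hR0]
      calc Real.exp (Real.log R * (G / Real.log (k+1)))
          ≤ Real.exp (Real.log k) :=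
            Real.exp_le_exp.mpr (by rw [mul_comm]; exact key)
        _ = k := Real.exp_log hk0
    linarith
  · have h1 : Filter.Tendsto (fun k : ℝ => Real.log (k+1)) (nhdsWithin 0 (Set.Ioi 0))
        (nhdsWithin 0 (Set.Ioi 0)) := by
      rw [tendsto_nhdsWithin_iff]
      constructor
      · have : Filter.Tendsto (fun k : ℝ => Real.log (k+1)) (nhds 0) (nhds 0) := by
          have := (Real.continuousAt_log (by norm_num : (0:ℝ)+1 ≠ 0)).comp
            (continuous_add_right 1).continuousAt (x := (0:ℝ))
          simpa [Function.comp_def] using this.tendsto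
        exact this.mono_left nhdsWithin_le_nhds
      · filter_upwards [self_mem_nhdsWithin] with k hk
        exact Real.log_pos (by simpa using (Set.mem_Ioi.mp hk) |>.trans_le (le_refl k) |> fun h => by linarith [Set.mem_Ioi.mp hk])
    have h2 : Filter.Tendsto (fun k : ℝ => (Real.log (k+1))⁻¹) (nhdsWithin 0 (Set.Ioi 0))
        Filter.atTop := tendsto_inv_nhdsGT_zero.comp h1
    have h3 : Filter.Tendsto (fun k : ℝ => G / Real.log (k+1)) (nhdsWithin 0 (Set.Ioi 0))
        Filter.atBot := by
      simp_rw [div_eq_mul_inv]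
      exact Filter.Tendsto.const_mul_atTop_of_neg hG h2
    exact (tendsto_rpow_atBot_of_base_gt_one R hR).comp h3
end
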